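/- If K ⊆ ℝ² is compact and A ⊆ ℝ² is open and bounded, then the union A ∪ K is strongly good: for every surjective isometry f : ℝ² → ℝ² with f(A ∪ K) ⊆ A ∪ K, one has f(A ∪ K) = A ∪ K. -/
import Mathlib


open Set Function

abbrev Plane := EuclideanSpace ℝ (Fin 2)

/-- Geometric equality: some surjective isometry of the plane maps `S₁` onto `S₂`. -/
def GeomEq (S₁ S₂ : Set Plane) : Prop :=
  ∃ f : Plane → Plane, Isometry f ∧ Function.Surjective f ∧ f '' S₁ = S₂

/-- `S₁` is equal to or smaller than `S₂`: some surjective isometry maps `S₁` into `S₂`. -/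
def GeomLe (S₁ S₂ : Set Plane) : Prop :=
  ∃ f : Plane → Plane, Isometry f ∧ Function.Surjective f ∧ f '' S₁ ⊆ S₂

/-- A figure is good if `A ≤ B` and `B ≤ A` imply `A ≈ B` for every figure `B`. -/
def IsGood (A : Set Plane) : Prop :=
  ∀ B : Set Plane, GeomLe A B → GeomLe B A → GeomEq A B

/-- A figure is strongly good if every surjective isometry mapping it into itself maps it onto itself. -/
def IsStronglyGood (A : Set Plane) : Prop :=
  ∀ f : Plane → Plane, Isometry f → Function.Surjective f → f '' A ⊆ A → f '' A = A

/-- An isometry mapping a compact set into itself maps it onto itself. -/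
lemma isom_image_of_compact (f : Plane → Plane) (hf : Isometry f) {C : Set Plane}
    (hC : IsCompact C) (hsub : f '' C ⊆ C) : f '' C = C := by
  refine Subset.antisymm hsub ?_
  have hiso : ∀ n : ℕ, Isometry (f^[n]) := by
    intro n
    induction n with
    | zero => simpa using isometry_id
    | succ n ih => rw [Function.iterate_succ]; exact ih.comp hf
  have hiter : ∀ n : ℕ, ∀ x ∈ C, f^[n] x ∈ C := by
    intro n
    induction n with
    | zero => simp
    | succ n ih =>
      intro x hx
      rw [Function.iterate_succ_apply]
      exact ih _ (hsub ⟨x, hx, rfl⟩)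
  have hclosed : IsClosed (f '' C) := (hC.image hf.continuous).isClosed
  intro x hx
  rw [← hclosed.closure_eq, Metric.mem_closure_iff]
  intro ε hε
  obtain ⟨a, -, φ, hφ, hconv⟩ := hC.tendsto_subseq (fun n => hiter n x hx)
  rw [Metric.tendsto_atTop] at hconv
  obtain ⟨N, hN⟩ := hconv (ε / 2) (by linarith)
  have h1 := hN N le_rfl
  have h2 := hN (N + 1) (Nat.le_succ N)
  have hmn : φ N < φ (N + 1) := hφ (Nat.lt_succ_self N)
  set k := φ (N + 1) - φ N with hk
  have hsplit : f^[φ (N + 1)] x = f^[φ N] (f^[k] x) := by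
    rw [← Function.iterate_add_apply]
    congr 1
    omega
  have hdist : dist x (f^[k] x) < ε := by
    have heq := (hiso (φ N)).dist_eq x (f^[k] x)
    calc dist x (f^[k] x) = dist (f^[φ N] x) (f^[φ N] (f^[k] x)) := heq.symm
      _ = dist (f^[φ N] x) (f^[φ (N + 1)] x) := by rw [← hsplit]
      _ ≤ dist (f^[φ N] x) a + dist a (f^[φ (N + 1)] x) := dist_triangle _ _ _
      _ < ε / 2 + ε / 2 := by
          rw [dist_comm a]
          exact add_lt_add h1 h2
      _ = ε := by ring
  refine ⟨f^[k] x, ?_, hdist⟩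
  obtain ⟨k', hk'⟩ : ∃ k', k = k' + 1 := ⟨k - 1, by omega⟩
  rw [hk', Function.iterate_succ_apply']
  exact ⟨f^[k'] x, hiter k' x hx, rfl⟩

/-- Proposition 1.9: the union of a compact set with an open bounded set is strongly good. -/
theorem isStronglyGood_union (K A : Set Plane) (hK : IsCompact K)
    (hAo : IsOpen A) (hAb : Bornology.IsBounded A) : IsStronglyGood (A ∪ K) := by
  intro f hf hsurj hsub
  set F : Set Plane := A ∪ K with hF
  have hinj : Function.Injective f := hf.injective
  -- the inverse isometry
  let e : Plane ≃ Plane := Equiv.ofBijective f ⟨hinj, hsurj⟩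
  set g : Plane → Plane := fun x => e.symm x with hgdef
  have hfg : ∀ x, f (g x) = x := fun x => e.apply_symm_apply x
  have hgf : ∀ x, g (f x) = x := fun x => e.symm_apply_apply x
  have hg : Isometry g := by
    intro x y
    have := hf (g x) (g y)
    rw [hfg, hfg] at this
    exact this.symm
  have hginj : Function.Injective g := hg.injective
  have hgfc : g ∘ f = id := funext hgf
  have hfgc : f ∘ g = id := funext hfg
  have hgimg : ∀ S : Set Plane, g '' (f '' S) = S := by
    intro S
    rw [← Set.image_comp, hgfc, Set.image_id]
  have hfimg : ∀ S : Set Plane, f '' (g '' S) = S := by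
    intro S
    rw [← Set.image_comp, hfgc, Set.image_id]
  -- closure of F is compact and invariant
  have hFb : Bornology.IsBounded F := hAb.union hK.isBounded
  have hFc : IsCompact (closure F) := hFb.isCompact_closure
  have hfcl : f '' closure F ⊆ closure F := by
    calc f '' closure F ⊆ closure (f '' F) := image_closure_subset_closure_image hf.continuous
      _ ⊆ closure F := closure_mono hsub
  have hCF : f '' closure F = closure F := isom_image_of_compact f hf hFc hfcl
  have hgCF : g '' closure F = closure F := by
    conv_lhs => rw [← hCF]
    exact hgimg _
  -- the "missing" set N
  set N : Set Plane := closure F \ F with hN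
  have hFg : F ⊆ g '' F := by
    intro x hx
    exact ⟨f x, hsub ⟨x, hx, rfl⟩, hgf x⟩
  have hgN : g '' N ⊆ N := by
    rw [hN, Set.image_diff hginj, hgCF]
    exact Set.diff_subset_diff_right hFg
  have hNsub : closure N ⊆ closure F := closure_minimal diff_subset isClosed_closure
  have hNc : IsCompact (closure N) := hFc.of_isClosed_subset isClosed_closure hNsub
  have hgNcl : g '' closure N ⊆ closure N := by
    calc g '' closure N ⊆ closure (g '' N) := image_closure_subset_closure_image hg.continuous
      _ ⊆ closure N := closure_mono hgN
  have hgNC : g '' closure N = closure N := isom_image_of_compact g hg hNc hgNcl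
  have hfNC : f '' closure N = closure N := by
    conv_lhs => rw [← hgNC]
    exact hfimg _
  -- closure N misses A
  have hNA : closure N ⊆ Aᶜ := by
    apply closure_minimal _ hAo.isClosed_compl
    intro x hx
    exact fun hxA => hx.2 (Or.inl hxA)
  have hNF : closure N ∩ F = closure N ∩ K := by
    ext x
    constructor
    · rintro ⟨hx1, hx2⟩
      rcases hx2 with h | h
      · exact absurd h (hNA hx1)
      · exact ⟨hx1, h⟩
    · rintro ⟨hx1, hx2⟩
      exact ⟨hx1, Or.inr hx2⟩
  -- the compact set M
  set M : Set Plane := closure N ∩ K with hM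
  have hMc : IsCompact M := hK.inter_left isClosed_closure
  have hfM : f '' M ⊆ M := by
    have h1 : f '' M = closure N ∩ f '' K := by
      rw [hM, Set.image_inter hinj, hfNC]
    rw [h1, ← hNF]
    apply Set.inter_subset_inter_right
    intro x hx
    rcases hx with ⟨y, hy, rfl⟩
    exact hsub ⟨y, Or.inr hy, rfl⟩
  have hMeq : f '' M = M := isom_image_of_compact f hf hMc hfM
  -- conclusion
  refine Subset.antisymm hsub ?_
  intro x hx
  by_cases hw : g x ∈ F
  · exact ⟨g x, hw, hfg x⟩
  · have hwN : g x ∈ N := by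
      refine ⟨?_, hw⟩
      rw [← hgCF]
      exact ⟨x, subset_closure hx, rfl⟩
    have hxN : x ∈ closure N := by
      rw [← hfNC]
      exact ⟨g x, subset_closure hwN, hfg x⟩
    have hxM : x ∈ M := by
      rw [← hNF]
      exact ⟨hxN, hx⟩
    rw [← hMeq] at hxM
    rcases hxM with ⟨y, hy, rfl⟩
    exact ⟨y, Or.inr hy.2, rfl⟩
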